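/- For m×n matrices A, B over F_q, the subspace distance between the lifted subspaces satisfies d_s(Λ(A), Λ(B)) = 2·rank(A − B). That is, the lifting map is an isometry from (F_q^{m×n}, 2·d_r) into the subspace metric space, where d_r is the rank distance. -/

import Mathlib

open Module Matrix

/-- The lifting map: `Λ(A)` is the row space of `(I_m | A)` inside `F^{m+n}`
(coordinates indexed by `Fin m ⊕ Fin n`). -/
noncomputable def liftMRD (F : Type*) [Field F] (m n : ℕ)
    (A : Matrix (Fin m) (Fin n) F) : Submodule F ((Fin m ⊕ Fin n) → F) :=
  LinearMap.range (Matrix.vecMulLinear (Matrix.fromCols (1 : Matrix (Fin m) (Fin m) F) A))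

lemma liftMRD_inj (F : Type*) [Field F] (m n : ℕ) (A : Matrix (Fin m) (Fin n) F) :
    Function.Injective
      (Matrix.vecMulLinear (Matrix.fromCols (1 : Matrix (Fin m) (Fin m) F) A)) := by
  intro x y h
  simp only [Matrix.vecMulLinear_apply, Matrix.vecMul_fromCols, Matrix.vecMul_one] at h
  funext i
  have := congrFun h (Sum.inl i)
  simpa using this

lemma finrank_liftMRD (F : Type*) [Field F] (m n : ℕ) (A : Matrix (Fin m) (Fin n) F) :
    finrank F ↥(liftMRD F m n A) = m := by
  rw [liftMRD, LinearMap.finrank_range_of_inj (liftMRD_inj F m n A)]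
  simp

lemma liftMRD_inf (F : Type*) [Field F] (m n : ℕ) (A B : Matrix (Fin m) (Fin n) F) :
    liftMRD F m n A ⊓ liftMRD F m n B =
      Submodule.map
        (Matrix.vecMulLinear (Matrix.fromCols (1 : Matrix (Fin m) (Fin m) F) A))
        (LinearMap.ker (Matrix.vecMulLinear (A - B))) := by
  ext v
  simp only [Submodule.mem_inf, liftMRD, LinearMap.mem_range, Submodule.mem_map,
    LinearMap.mem_ker, Matrix.vecMulLinear_apply, Matrix.vecMul_fromCols,
    Matrix.vecMul_one]
  constructor
  · rintro ⟨⟨x, hx⟩, ⟨y, hy⟩⟩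
    have hxy : x = y := by
      funext i
      have := congrFun (hx.trans hy.symm) (Sum.inl i)
      simpa using this
    refine ⟨x, ?_, hx⟩
    rw [Matrix.vecMul_sub, hxy]
    have : y ᵥ* A = y ᵥ* B := by
      funext j
      have := congrFun (hx.trans hy.symm) (Sum.inr j)
      simpa [hxy] using this
    rw [this, sub_self]
  · rintro ⟨x, hx, rfl⟩
    refine ⟨⟨x, rfl⟩, ⟨x, ?_⟩⟩
    have h2 : x ᵥ* A = x ᵥ* B := by
      have h3 := Matrix.vecMul_sub A B x
      rw [hx] at h3
      exact sub_eq_zero.mp h3.symm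
    rw [h2]

lemma rank_vecMulLinear (F : Type*) [Field F] (m n : ℕ) (C : Matrix (Fin m) (Fin n) F) :
    finrank F ↥(LinearMap.range (Matrix.vecMulLinear C)) = C.rank := by
  rw [← Matrix.mulVecLin_transpose]
  rw [show finrank F ↥(LinearMap.range (Matrix.mulVecLin Cᵀ)) = Cᵀ.rank from rfl,
    Matrix.rank_transpose]

/-- The lifting map is an isometry from `(F_q^{m×n}, 2·d_r)` into the subspace metric space:
`d_s(Λ(A), Λ(B)) = 2 · rank(A − B)`. -/
theorem liftMRD_isometry (F : Type*) [Field F] (m n : ℕ)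
    (A B : Matrix (Fin m) (Fin n) F) :
    (finrank F ↥(liftMRD F m n A) : ℤ) + (finrank F ↥(liftMRD F m n B) : ℤ)
        - 2 * (finrank F ↥(liftMRD F m n A ⊓ liftMRD F m n B) : ℤ)
      = 2 * ((A - B).rank : ℤ) := by
  have hA := finrank_liftMRD F m n A
  have hB := finrank_liftMRD F m n B
  have hrn := LinearMap.finrank_range_add_finrank_ker (Matrix.vecMulLinear (A - B))
  rw [rank_vecMulLinear] at hrn
  simp only [finrank_pi, Fintype.card_fin] at hrn
  have hinf : finrank F ↥(liftMRD F m n A ⊓ liftMRD F m n B)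
      = finrank F ↥(LinearMap.ker (Matrix.vecMulLinear (A - B))) := by
    rw [liftMRD_inf]
    exact (LinearEquiv.finrank_eq
      (Submodule.equivMapOfInjective _ (liftMRD_inj F m n A) _)).symm
  rw [hA, hB, hinf]
  omega
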